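/- Let G be a simple graph with no ds-completable card and let B be its set of bad vertices. Then the sum of degrees of vertices in B is at least |V(G)| + (|B| mod 2). -/

import Mathlib

open SimpleGraph Finset
open scoped Classical

variable {V : Type*}

/-- The degree of a vertex `u` in a simple graph `G`. -/
noncomputable def deg (G : SimpleGraph V) (u : V) : ℕ := (G.neighborSet u).ncard

/-- The degree of `u` in the card `G − v` (the vertex-deleted subgraph at `v`). -/
noncomputable def cardDeg (G : SimpleGraph V) (v u : V) : ℕ := (G.neighborSet u \ {v}).ncard

/-- The card `G − v` is ds-completable: for each degree `d`, the vertices of degree `d`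
in `G − v` are either all neighbours of `v` in `G` or all non-neighbours of `v` in `G`. -/
def DsCompletable (G : SimpleGraph V) (v : V) : Prop :=
  ∀ d : ℕ, (∀ u, u ≠ v → cardDeg G v u = d → G.Adj v u) ∨
           (∀ u, u ≠ v → cardDeg G v u = d → ¬ G.Adj v u)

/-- A vertex is bad if the graph contains a vertex of degree one less. -/
def Bad (G : SimpleGraph V) (v : V) : Prop := ∃ w, deg G w + 1 = deg G v

/-- A vertex is dull if the graph contains a vertex of degree one more. -/
def Dull (G : SimpleGraph V) (v : V) : Prop := ∃ w, deg G w = deg G v + 1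

/-- ε(s,t): the number of stubs on `s` used by edges from `s` to `t`
(for disjoint `s`, `t` this is the number of edges between them; for `s = t`
it is twice the number of edges inside `s`). -/
noncomputable def stubs (G : SimpleGraph V) (s t : Finset V) : ℕ :=
  ((s ×ˢ t).filter fun p => G.Adj p.1 p.2).card

/-- A vertex set is neighbourly if no vertex outside the set has a degree one less
than that of a vertex in the set. -/
def Neighbourly (G : SimpleGraph V) (K : Finset V) : Prop :=
  ∀ u ∉ K, ∀ w ∈ K, deg G u + 1 ≠ deg G w

/-- A vertex set is `d`-neighbourly if it contains a vertex `v` of degree `d` such that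
no vertex outside the set has a degree one less than that of any member other than `v`. -/
def DNeighbourly (G : SimpleGraph V) (d : ℕ) (K : Finset V) : Prop :=
  ∃ v ∈ K, deg G v = d ∧ ∀ u ∉ K, ∀ w ∈ K, w ≠ v → deg G u + 1 ≠ deg G w

lemma deg_eq_degree [Fintype V] (G : SimpleGraph V) (u : V) : deg G u = G.degree u := by
  classical
  have h1 : G.neighborSet u = ↑(univ.filter fun w => G.Adj u w) := by ext w; simp
  rw [deg, SimpleGraph.degree, SimpleGraph.neighborFinset_eq_filter, h1, Set.ncard_coe_finset]

lemma exists_bad_neighbor [Fintype V] (G : SimpleGraph V) (v : V)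
    (h : ¬ DsCompletable G v) : ∃ b, Bad G b ∧ G.Adj b v := by
  by_contra hb
  push_neg at hb
  apply h
  intro d
  by_cases hex : ∃ u, u ≠ v ∧ ¬ G.Adj v u ∧ cardDeg G v u = d
  · right
    intro u hu hd hadj
    obtain ⟨u2, hu2v, hu2adj, hu2d⟩ := hex
    -- deg u = d + 1
    have hdegu : deg G u = d + 1 := by
      have hvmem : v ∈ G.neighborSet u := by
        rw [SimpleGraph.mem_neighborSet]; exact hadj.symm
      have h2 := Set.ncard_diff_singleton_add_one hvmem (Set.toFinite _)
      unfold cardDeg at hd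
      unfold deg
      omega
    have hdegu2 : deg G u2 = d := by
      have hvmem : v ∉ G.neighborSet u2 := by
        rw [SimpleGraph.mem_neighborSet]
        intro hc; exact hu2adj hc.symm
      unfold cardDeg at hu2d
      rw [Set.diff_singleton_eq_self hvmem] at hu2d
      exact hu2d
    exact hb u ⟨u2, by omega⟩ hadj.symm
  · left
    intro u hu hd
    by_contra hadj
    exact hex ⟨u, hu, hadj, hd⟩

theorem stmt10 [Fintype V] (G : SimpleGraph V)
    (h : ∀ v : V, ¬ DsCompletable G v) :
    Fintype.card V + (univ.filter fun v => Bad G v).card % 2 ≤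
      ∑ v ∈ univ.filter (fun v => Bad G v), deg G v := by
  classical
  set B := univ.filter (fun v => Bad G v) with hB
  have hex : ∀ u : V, ∃ b, Bad G b ∧ G.Adj b u := fun u =>
    exists_bad_neighbor G u (h u)
  set g : V → V := fun u => (hex u).choose with hg
  have hgB : ∀ u, Bad G (g u) := fun u => (hex u).choose_spec.1
  have hgadj : ∀ u, G.Adj (g u) u := fun u => (hex u).choose_spec.2
  set f : V → ℕ := fun u => (B.filter fun b => G.Adj b u).card with hf
  have hsum : ∑ v ∈ B, deg G v = ∑ u : V, f u := by
    have h1 : ∀ v ∈ B, deg G v = ∑ u : V, if G.Adj v u then 1 else 0 := by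
      intro v _
      rw [deg_eq_degree, SimpleGraph.degree, SimpleGraph.neighborFinset_def]
      rw [show (G.neighborSet v).toFinset = univ.filter (fun u => G.Adj v u) by
        ext u; simp]
      exact Finset.card_filter _ _
    rw [Finset.sum_congr rfl h1, Finset.sum_comm]
    refine Finset.sum_congr rfl fun u _ => ?_
    rw [hf]
    exact (Finset.card_filter _ _).symm
  have hfl : ∀ u : V, 1 ≤ f u := by
    intro u
    have : g u ∈ B.filter fun b => G.Adj b u := by
      simp only [Finset.mem_filter, hB, Finset.mem_univ, true_and]
      exact ⟨hgB u, hgadj u⟩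
    exact Finset.card_pos.mpr ⟨_, this⟩
  have hlow : Fintype.card V ≤ ∑ u : V, f u := by
    calc Fintype.card V = ∑ _u : V, 1 := by simp
    _ ≤ ∑ u : V, f u := Finset.sum_le_sum fun u _ => hfl u
  rcases Nat.mod_two_eq_zero_or_one B.card with hpar | hpar
  · rw [hpar, add_zero, hsum]; exact hlow
  · rw [hpar, hsum]
    by_contra hlt
    push_neg at hlt
    have heq : ∀ u ∈ (univ : Finset V), (1 : ℕ) = f u :=
      (Finset.sum_eq_sum_iff_of_le (fun u _ => hfl u)).mp (by
        have : ∑ _u : V, (1:ℕ) = Fintype.card V := by simp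
        omega)
    have huniq : ∀ u b, Bad G b → G.Adj b u → b = g u := by
      intro u b hbb hba
      have hc : (B.filter fun b => G.Adj b u).card ≤ 1 :=
        le_of_eq (heq u (Finset.mem_univ u)).symm
      have hm : ∀ x, Bad G x → G.Adj x u → x ∈ B.filter fun b => G.Adj b u := by
        intro x h1 h2
        simp only [Finset.mem_filter, hB, Finset.mem_univ, true_and]
        exact ⟨h1, h2⟩
      exact Finset.card_le_one.mp hc b (hm b hbb hba) (g u) (hm _ (hgB u) (hgadj u))
    -- g is a fixed-point-free involution on B
    have hz : ∑ _u ∈ B, (1 : ZMod 2) = 0 := by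
      apply Finset.sum_involution (fun a _ => g a)
      · intro a _; decide
      · intro a ha _
        exact fun hc => (G.irrefl (hc ▸ hgadj a))
      · intro a ha
        simp only [hB, Finset.mem_filter, Finset.mem_univ, true_and]
        exact hgB a
      · intro a ha
        have haB : Bad G a := by
          simpa [hB] using ha
        exact (huniq (g a) a haB (hgadj a).symm).symm
    have : ((B.card : ℕ) : ZMod 2) = 0 := by
      rw [← hz, Finset.sum_const, nsmul_eq_mul, mul_one]
    rw [ZMod.natCast_eq_zero_iff] at this
    omega
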